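/- Each diagonal series of the triangle is nondecreasing: for all natural numbers x and n with n ≥ x, T(n+1, (n+1)−x) ≥ T(n, n−x). (Multiplication by 2 injects the (n−x)-dimensional numbers of the 2^n space into the (n+1−x)-dimensional numbers of the 2^{n+1} space.) -/

import Mathlib

/-- The dimension of a natural number: the number of prime factors counted with multiplicity. -/
def dimension (m : ℕ) : ℕ := m.primeFactorsList.length

/-- `T n d` is the number of natural numbers `m` with `1 ≤ m ≤ 2^n` and dimension `d`. -/
def T (n d : ℕ) : ℕ :=
  ((Finset.Icc 1 (2 ^ n)).filter (fun m => dimension m = d)).card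

lemma dimension_two_mul {m : ℕ} (hm : m ≠ 0) : dimension (2 * m) = dimension m + 1 := by
  have h := ArithmeticFunction.cardFactors_mul (m := 2) (n := m) two_ne_zero hm
  simp [ArithmeticFunction.cardFactors_apply, dimension] at h ⊢
  omega

/-- Each diagonal series of the triangle is nondecreasing. -/
theorem diagonal_mono (x n : ℕ) (hxn : x ≤ n) :
    T n (n - x) ≤ T (n + 1) (n + 1 - x) := by
  apply Finset.card_le_card_of_injOn (fun m => 2 * m)
  · intro m hm
    simp only [Finset.mem_coe, Finset.mem_filter, Finset.mem_Icc] at hm ⊢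
    obtain ⟨⟨h1, h2⟩, h3⟩ := hm
    refine ⟨⟨by omega, ?_⟩, ?_⟩
    · calc 2 * m ≤ 2 * 2 ^ n := by omega
        _ = 2 ^ (n + 1) := by ring
    · rw [dimension_two_mul (by omega), h3]; omega
  · intro a _ b _ h
    simp only [] at h
    omega
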